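/- Let M be a Poisson manifold with bracket {·,·}. Then there is a unique Lie algebroid structure on T*M whose bracket on exact 1-forms satisfies [df, dg] = d{f,g} and whose anchor sends df to the Hamiltonian vector field X_f = {f,·}. The general bracket on 1-forms is given by [α,β] = L_{π♯α} β − L_{π♯β} α − d(π(α,β)), where π is the Poisson bivector and π♯: T*M → TM the associated bundle map, and this bracket satisfies the Jacobi identity (equivalently, [π,π]_{Schouten} = 0). -/

import Mathlib

open scoped Manifold Derivation

noncomputable section

/-- The commutative ring of smooth real-valued functions on a manifold. -/
abbrev Cinf {E : Type*} [NormedAddCommGroup E] [NormedSpace ℝ E]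
    {H : Type*} [TopologicalSpace H] (I : ModelWithCorners ℝ E H)
    (M : Type*) [TopologicalSpace M] [ChartedSpace H M] : Type _ :=
  C^(⊤ : ℕ∞)⟮I, M; ℝ⟯

namespace PoissonKaehlerAux

open Finsupp

variable {S : Type*} [CommRing S] [Algebra ℝ S]

local notation "Ω" => KaehlerDifferential ℝ S
local notation "dd" => KaehlerDifferential.D ℝ S

noncomputable def tot : (S →₀ S) →ₗ[S] KaehlerDifferential ℝ S :=
  Finsupp.linearCombination S (⇑(KaehlerDifferential.D ℝ S))

/-- Induction principle: every Kähler differential is a sum of elements `f • dd g`. -/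
theorem omega_induction {p : Ω → Prop} (h0 : p 0)
    (hadd : ∀ x y, p x → p y → p (x + y))
    (hgen : ∀ f g : S, p (f • dd g)) : ∀ ω, p ω := by
  have hmem : ∀ ω : Ω, ω ∈ AddSubmonoid.closure {x : Ω | ∃ f g : S, x = f • dd g} := by
    intro ω
    let T : Submodule S Ω :=
      { carrier := AddSubmonoid.closure {x : Ω | ∃ f g : S, x = f • dd g}
        add_mem' := fun h1 h2 => AddSubmonoid.add_mem _ h1 h2
        zero_mem' := AddSubmonoid.zero_mem _
        smul_mem' := by
          intro s x hx
          induction hx using AddSubmonoid.closure_induction with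
          | mem y hy =>
            obtain ⟨f, g, rfl⟩ := hy
            rw [smul_smul]
            exact AddSubmonoid.subset_closure ⟨s * f, g, rfl⟩
          | zero => rw [smul_zero]; exact AddSubmonoid.zero_mem _
          | add y z hy' hz' hy hz => rw [smul_add]; exact AddSubmonoid.add_mem _ hy hz }
    have hT : T = ⊤ := by
      rw [eq_top_iff, ← KaehlerDifferential.span_range_derivation ℝ S, Submodule.span_le]
      rintro _ ⟨g, rfl⟩
      exact AddSubmonoid.subset_closure ⟨1, g, (one_smul _ _).symm⟩
    have h2 : ω ∈ T := hT.symm ▸ Submodule.mem_top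
    exact h2
  intro ω
  exact AddSubmonoid.closure_induction (fun x hx => by obtain ⟨f, g, rfl⟩ := hx; exact hgen f g)
    h0 (fun x y _ _ px py => hadd x y px py) (hmem ω)

/-- The Lie derivative at the level of the free presentation. -/
noncomputable def lfin (X : Derivation ℝ S S) : (S →₀ S) →ₗ[ℝ] (S →₀ S) :=
  Finsupp.lsum ℝ fun g =>
    ((Finsupp.lsingle g : S →ₗ[S] (S →₀ S)).restrictScalars ℝ).comp X.toLinearMap
      + (Finsupp.lsingle (X g) : S →ₗ[S] (S →₀ S)).restrictScalars ℝ

theorem lfin_single (X : Derivation ℝ S S) (g f : S) :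
    lfin X (Finsupp.single g f) = Finsupp.single g (X f) + Finsupp.single (X g) f := by
  simp [lfin]

theorem tot_single (g f : S) : tot (Finsupp.single g f) = f • dd g := by
  simp [tot, Finsupp.linearCombination_single]

theorem tot_lfin_single (X : Derivation ℝ S S) (g f : S) :
    tot (lfin X (Finsupp.single g f)) = X f • dd g + f • dd (X g) := by
  rw [lfin_single, map_add, tot_single, tot_single]

theorem tot_lfin_smul (X : Derivation ℝ S S) (s : S) (c : S →₀ S) :
    tot (lfin X (s • c)) = s • tot (lfin X c) + X s • tot c := by
  induction c using Finsupp.induction_linear with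
  | zero => simp
  | add a b ha hb =>
    rw [smul_add, map_add, map_add, map_add, map_add, ha, hb, map_add]
    module
  | single a b =>
    rw [Finsupp.smul_single, smul_eq_mul, tot_lfin_single, tot_lfin_single, tot_single,
      Derivation.leibniz, smul_eq_mul, smul_eq_mul]
    rw [smul_add, smul_smul, smul_smul, smul_smul, add_smul]
    rw [mul_comm (X s) b]
    abel

theorem ker_stable (X : Derivation ℝ S S) :
    ∀ c ∈ KaehlerDifferential.kerTotal ℝ S, tot (lfin X c) = 0 ∧ tot c = 0 := by
  let W : Submodule S (S →₀ S) :=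
    { carrier := {c | tot (lfin X c) = 0 ∧ tot c = 0}
      add_mem' := by
        rintro a b ⟨ha1, ha2⟩ ⟨hb1, hb2⟩
        refine ⟨?_, ?_⟩ <;> simp_all [map_add]
      zero_mem' := by simp
      smul_mem' := by
        rintro s c ⟨h1, h2⟩
        refine ⟨?_, ?_⟩
        · rw [tot_lfin_smul, h1, h2, smul_zero, smul_zero, add_zero]
        · rw [map_smul, h2, smul_zero] }
  have hW : KaehlerDifferential.kerTotal ℝ S ≤ W := by
    rw [KaehlerDifferential.kerTotal, Submodule.span_le]
    rintro x (((⟨⟨a, b⟩, rfl⟩ | ⟨⟨a, b⟩, rfl⟩) | ⟨r, rfl⟩))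
    · constructor
      · simp only [map_add, map_sub, tot_lfin_single, tot_single, Derivation.map_one_eq_zero,
          zero_smul, one_smul, map_add X, map_add (dd)]
        abel
      · simp only [map_add, map_sub, tot_single, map_add (dd), one_smul]
        abel
    · constructor
      · have hX : X (a * b) = a * X b + b * X a := by
          rw [Derivation.leibniz, smul_eq_mul, smul_eq_mul]
        have hd : dd (X (a * b)) = a • dd (X b) + X b • dd a + b • dd (X a) + X a • dd b := by
          rw [hX, map_add (dd), Derivation.leibniz (dd), Derivation.leibniz (dd)]
          abel
        simp only [map_add, map_sub, tot_lfin_single, tot_single, Derivation.map_one_eq_zero,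
          zero_smul, one_smul, zero_add, hd]
        abel
      · simp only [map_add, map_sub, tot_single, Derivation.leibniz (dd), one_smul]
        abel
    · constructor
      · simp only [tot_lfin_single, Derivation.map_one_eq_zero, Derivation.map_algebraMap,
          zero_smul, map_zero, smul_zero, zero_add, add_zero]
      · simp only [tot_single, one_smul, Derivation.map_algebraMap]
  exact fun c hc => hW hc

theorem tot_surjective : Function.Surjective (tot (S := S)) :=
  KaehlerDifferential.linearCombination_surjective ℝ S

noncomputable def sec (ω : Ω) : (S →₀ S) := Function.surjInv tot_surjective ω

theorem tot_sec (ω : Ω) : tot (sec ω) = ω := Function.surjInv_eq _ _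

/-- The Lie derivative of a 1-form along a derivation. -/
noncomputable def lie (X : Derivation ℝ S S) (ω : Ω) : Ω := tot (lfin X (sec ω))

theorem lie_tot (X : Derivation ℝ S S) (c : S →₀ S) : lie X (tot c) = tot (lfin X c) := by
  have hk : sec (tot c) - c ∈ KaehlerDifferential.kerTotal ℝ S := by
    rw [← KaehlerDifferential.kerTotal_eq]
    have : tot (sec (tot c) - c) = 0 := by rw [map_sub, tot_sec, sub_self]
    exact this
  have h := (ker_stable X _ hk).1
  rw [map_sub, map_sub, sub_eq_zero] at h
  exact h

theorem lie_smul_D (X : Derivation ℝ S S) (f g : S) :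
    lie X (f • dd g) = X f • dd g + f • dd (X g) := by
  rw [← tot_single, lie_tot, tot_lfin_single]

theorem lie_D (X : Derivation ℝ S S) (g : S) : lie X (dd g) = dd (X g) := by
  have := lie_smul_D X 1 g
  rwa [one_smul, Derivation.map_one_eq_zero, zero_smul, zero_add, one_smul] at this

theorem lie_add (X : Derivation ℝ S S) (ω ω' : Ω) :
    lie X (ω + ω') = lie X ω + lie X ω' := by
  conv_lhs => rw [← tot_sec ω, ← tot_sec ω', ← map_add, lie_tot, map_add, map_add]
  rfl

theorem lie_zero (X : Derivation ℝ S S) : lie X 0 = 0 := by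
  have := lie_tot X 0
  simpa using this

theorem lie_smulS (X : Derivation ℝ S S) (s : S) (ω : Ω) :
    lie X (s • ω) = s • lie X ω + X s • ω := by
  conv_lhs => rw [← tot_sec ω, ← map_smul, lie_tot]
  rw [tot_lfin_smul, tot_sec]
  rfl

theorem lie_addX (X Y : Derivation ℝ S S) (ω : Ω) :
    lie (X + Y) ω = lie X ω + lie Y ω := by
  induction ω using omega_induction with
  | h0 => rw [lie_zero, lie_zero, lie_zero, add_zero]
  | hadd x y hx hy => rw [lie_add, lie_add, lie_add, hx, hy]; abel
  | hgen f g =>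
    rw [lie_smul_D, lie_smul_D, lie_smul_D, Derivation.add_apply, Derivation.add_apply, map_add]
    module

theorem lie_smulSX (f : S) (X : Derivation ℝ S S) (ω : Ω) :
    lie (f • X) ω = f • lie X ω + (X.liftKaehlerDifferential ω) • dd f := by
  induction ω using omega_induction with
  | h0 => rw [lie_zero, lie_zero, smul_zero, map_zero, zero_smul, add_zero]
  | hadd x y hx hy =>
    rw [lie_add, lie_add, hx, hy, map_add, add_smul, smul_add]
    abel
  | hgen h g =>
    rw [lie_smul_D, lie_smul_D, Derivation.smul_apply, Derivation.smul_apply, smul_eq_mul,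
      smul_eq_mul, Derivation.leibniz (dd), map_smul, Derivation.liftKaehlerDifferential_comp_D]
    simp only [smul_add, smul_smul, smul_eq_mul]
    rw [mul_comm h f]
    abel

theorem lie_smulR (c : ℝ) (X : Derivation ℝ S S) (ω : Ω) :
    lie (c • X) ω = c • lie X ω := by
  rw [← algebraMap_smul S c X, lie_smulSX, Derivation.map_algebraMap (KaehlerDifferential.D ℝ S),
    smul_zero, add_zero, algebraMap_smul]

theorem lie_smulR_arg (X : Derivation ℝ S S) (c : ℝ) (ω : Ω) :
    lie X (c • ω) = c • lie X ω := by
  rw [← algebraMap_smul S c ω, lie_smulS, Derivation.map_algebraMap, zero_smul, add_zero,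
    algebraMap_smul]

/-- The Hamiltonian derivation of `f`. -/
def ham (P : S →ₗ[ℝ] S →ₗ[ℝ] S)
    (hPleib : ∀ f g h, P f (g * h) = P f g * h + g * P f h) (f : S) :
    Derivation ℝ S S where
  toLinearMap := P f
  map_one_eq_zero' := by
    have h := hPleib f 1 1
    rw [mul_one, mul_one, one_mul] at h
    exact right_eq_add.mp h
  leibniz' a b := by
    have h := hPleib f a b
    simp only [smul_eq_mul]
    rw [h, mul_comm (P f a) b]
    ring

@[simp] theorem ham_apply (P : S →ₗ[ℝ] S →ₗ[ℝ] S) (hPleib) (f g : S) :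
    ham P hPleib f g = P f g := rfl

/-- `f ↦ X_f` as a derivation with values in derivations. -/
def hamD (P : S →ₗ[ℝ] S →ₗ[ℝ] S) (hPskew : ∀ f g, P f g = - P g f)
    (hPleib : ∀ f g h, P f (g * h) = P f g * h + g * P f h) :
    Derivation ℝ S (Derivation ℝ S S) where
  toFun f := ham P hPleib f
  map_add' f g := by
    ext m
    show P (f + g) m = (ham P hPleib f + ham P hPleib g) m
    rw [Derivation.add_apply, ham_apply, ham_apply, map_add, LinearMap.add_apply]
  map_smul' c f := by
    ext m
    show P (c • f) m = (c • ham P hPleib f) m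
    rw [Derivation.smul_apply, ham_apply, map_smul, LinearMap.smul_apply]
  map_one_eq_zero' := by
    ext m
    show P 1 m = (0 : Derivation ℝ S S) m
    have h2 : P m 1 = 0 := (ham P hPleib m).map_one_eq_zero
    rw [hPskew 1 m, h2, neg_zero, Derivation.zero_apply]
  leibniz' f g := by
    ext m
    show P (f * g) m = (f • ham P hPleib g + g • ham P hPleib f) m
    rw [Derivation.add_apply, Derivation.smul_apply, Derivation.smul_apply, ham_apply, ham_apply,
      smul_eq_mul, smul_eq_mul]
    rw [hPskew (f * g) m, hPleib m f g, neg_add, hPskew f m, hPskew g m]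
    ring

/-- The anchor map `Ω → Der(S)`. -/
noncomputable def anchor (P : S →ₗ[ℝ] S →ₗ[ℝ] S) (hPskew : ∀ f g, P f g = - P g f)
    (hPleib : ∀ f g h, P f (g * h) = P f g * h + g * P f h) :
    KaehlerDifferential ℝ S →ₗ[S] Derivation ℝ S S :=
  (hamD P hPskew hPleib).liftKaehlerDifferential

variable (P : S →ₗ[ℝ] S →ₗ[ℝ] S) (hPskew : ∀ f g, P f g = - P g f)
    (hPleib : ∀ f g h, P f (g * h) = P f g * h + g * P f h)

theorem anchor_D (f : S) : anchor P hPskew hPleib (dd f) = ham P hPleib f :=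
  Derivation.liftKaehlerDifferential_comp_D _ f

theorem anchor_smul_D (f g : S) :
    anchor P hPskew hPleib (f • dd g) = f • ham P hPleib g := by
  rw [map_smul, anchor_D]

/-- The pairing of a derivation with a 1-form. -/
noncomputable def pair (X : Derivation ℝ S S) : KaehlerDifferential ℝ S →ₗ[S] S :=
  X.liftKaehlerDifferential

theorem pair_smul_D (X : Derivation ℝ S S) (f g : S) : pair X (f • dd g) = f * X g := by
  rw [pair, map_smul, Derivation.liftKaehlerDifferential_comp_D, smul_eq_mul]

theorem pair_def (X : Derivation ℝ S S) : pair X = X.liftKaehlerDifferential := rfl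

theorem pair_D (X : Derivation ℝ S S) (g : S) : pair X (dd g) = X g :=
  Derivation.liftKaehlerDifferential_comp_D X g

theorem pair_addX (X Y : Derivation ℝ S S) (ω : Ω) :
    pair (X + Y) ω = pair X ω + pair Y ω := by
  induction ω using omega_induction with
  | h0 => simp
  | hadd x y hx hy => rw [map_add, map_add, map_add, hx, hy]; ring
  | hgen f g => rw [pair_smul_D, pair_smul_D, pair_smul_D, Derivation.add_apply, mul_add]

theorem pair_smulSX (s : S) (X : Derivation ℝ S S) (ω : Ω) :
    pair (s • X) ω = s * pair X ω := by
  induction ω using omega_induction with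
  | h0 => simp
  | hadd x y hx hy => rw [map_add, map_add, hx, hy]; ring
  | hgen f g => rw [pair_smul_D, pair_smul_D, Derivation.smul_apply, smul_eq_mul]; ring

theorem pair_smulRX (c : ℝ) (X : Derivation ℝ S S) (ω : Ω) :
    pair (c • X) ω = c • pair X ω := by
  rw [← algebraMap_smul S c X, pair_smulSX, ← smul_eq_mul, algebraMap_smul]

theorem pair_zeroX (ω : Ω) : pair (0 : Derivation ℝ S S) ω = 0 := by
  induction ω using omega_induction with
  | h0 => simp
  | hadd x y hx hy => rw [map_add, hx, hy, add_zero]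
  | hgen f g => rw [pair_smul_D]; simp

theorem pair_skew (α β : Ω) :
    pair (anchor P hPskew hPleib α) β = - pair (anchor P hPskew hPleib β) α := by
  induction α using omega_induction with
  | h0 => simp [pair_zeroX]
  | hadd x y hx hy =>
    rw [map_add, pair_addX, hx, hy, map_add]; ring
  | hgen f g =>
    induction β using omega_induction with
    | h0 => simp [pair_zeroX]
    | hadd x y hx hy => rw [map_add, map_add, pair_addX, hx, hy]; ring
    | hgen h k =>
      rw [anchor_smul_D, anchor_smul_D, pair_smulSX, pair_smulSX, pair_smul_D, pair_smul_D,
        ham_apply, ham_apply, hPskew g k]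
      ring

/-- The Koszul bracket on 1-forms. -/
noncomputable def brk (α β : Ω) : Ω :=
  lie (anchor P hPskew hPleib α) β - lie (anchor P hPskew hPleib β) α
    - dd (pair (anchor P hPskew hPleib α) β)

theorem brk_add_left (α α' β : Ω) :
    brk P hPskew hPleib (α + α') β = brk P hPskew hPleib α β + brk P hPskew hPleib α' β := by
  simp only [brk]
  rw [map_add, lie_addX, lie_add, pair_addX, map_add (dd)]
  abel

theorem brk_smulR_left (c : ℝ) (α β : Ω) :
    brk P hPskew hPleib (c • α) β = c • brk P hPskew hPleib α β := by
  simp only [brk]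
  rw [LinearMap.map_smul_of_tower, lie_smulR, lie_smulR_arg, pair_smulRX,
    Derivation.map_smul]
  module

theorem brk_antisym (α β : Ω) :
    brk P hPskew hPleib α β = - brk P hPskew hPleib β α := by
  simp only [brk]
  rw [pair_skew P hPskew hPleib β α, map_neg]
  abel

theorem brk_zero_left (β : Ω) : brk P hPskew hPleib 0 β = 0 := by
  have h := brk_add_left P hPskew hPleib 0 0 β
  rw [add_zero] at h
  exact (right_eq_add.mp h)

theorem brk_zero_right (α : Ω) : brk P hPskew hPleib α 0 = 0 := by
  rw [brk_antisym, brk_zero_left, neg_zero]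

theorem brk_add_right (α β γ : Ω) :
    brk P hPskew hPleib α (β + γ) = brk P hPskew hPleib α β + brk P hPskew hPleib α γ := by
  rw [brk_antisym P hPskew hPleib α (β + γ), brk_add_left, brk_antisym P hPskew hPleib β α,
    brk_antisym P hPskew hPleib γ α]
  abel

theorem brk_D_D (f g : S) :
    brk P hPskew hPleib (dd f) (dd g) = dd (P f g) := by
  simp only [brk]
  rw [anchor_D, anchor_D, lie_D, lie_D, pair_D, ham_apply, ham_apply,
    hPskew g f, map_neg]
  abel

theorem brk_leibniz (α β : Ω) (s : S) :
    brk P hPskew hPleib α (s • β)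
      = s • brk P hPskew hPleib α β + (anchor P hPskew hPleib α s) • β := by
  simp only [brk]
  rw [lie_smulS, map_smul (anchor P hPskew hPleib), lie_smulSX, ← pair_def,
    LinearMap.map_smul (pair _), smul_eq_mul, Derivation.leibniz (dd),
    pair_skew P hPskew hPleib β α, smul_sub, smul_sub]
  simp only [neg_smul, smul_eq_mul]
  abel

theorem brk_gen (f g h k : S) :
    brk P hPskew hPleib (f • dd g) (h • dd k)
      = (f * h) • dd (P g k) + (f * P g h) • dd k - (h * P k f) • dd g := by
  have h1 : brk P hPskew hPleib (f • dd g) (dd k)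
      = f • dd (P g k) - (P k f) • dd g := by
    rw [brk_antisym P hPskew hPleib (f • dd g) (dd k), brk_leibniz, brk_D_D, anchor_D,
      ham_apply, hPskew k g, map_neg, smul_neg]
    abel
  have h2 : anchor P hPskew hPleib (f • dd g) h = f * P g h := by
    rw [anchor_smul_D, Derivation.smul_apply, ham_apply, smul_eq_mul]
  rw [show (h : S) • dd k = h • dd k from rfl] at *
  rw [show brk P hPskew hPleib (f • dd g) (h • dd k)
      = h • brk P hPskew hPleib (f • dd g) (dd k)
        + (anchor P hPskew hPleib (f • dd g) h) • dd k from
    brk_leibniz P hPskew hPleib (f • dd g) (dd k) h, h1, h2]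
  rw [smul_sub, smul_smul, smul_smul, mul_comm h f]
  abel

section Jac

theorem brk_neg_left (x γ : Ω) :
    brk P hPskew hPleib (-x) γ = - brk P hPskew hPleib x γ := by
  have h := brk_add_left P hPskew hPleib x (-x) γ
  rw [add_neg_cancel, brk_zero_left] at h
  have h2 := h.symm
  rw [add_comm] at h2
  exact eq_neg_of_add_eq_zero_left h2

theorem brk_neg_right (α y : Ω) :
    brk P hPskew hPleib α (-y) = - brk P hPskew hPleib α y := by
  rw [brk_antisym P hPskew hPleib α (-y), brk_neg_left, brk_antisym P hPskew hPleib y α]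
  abel

theorem anchor_brk (hPjac : ∀ f g h, P f (P g h) = P (P f g) h + P g (P f h)) (α β : Ω) (m : S) :
    anchor P hPskew hPleib (brk P hPskew hPleib α β) m
      = anchor P hPskew hPleib α (anchor P hPskew hPleib β m)
        - anchor P hPskew hPleib β (anchor P hPskew hPleib α m) := by
  induction α using omega_induction with
  | h0 => simp [brk_zero_left]
  | hadd x y hx hy =>
    rw [brk_add_left, map_add, Derivation.add_apply, hx, hy]
    simp only [map_add, Derivation.add_apply]
    abel
  | hgen f g =>
    induction β using omega_induction with
    | h0 => simp [brk_zero_right]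
    | hadd x y hx hy =>
      rw [brk_add_right, map_add, Derivation.add_apply, hx, hy]
      simp only [map_add, Derivation.add_apply]
      abel
    | hgen h k =>
      rw [brk_gen, map_sub, map_add]
      simp only [anchor_smul_D, Derivation.sub_apply, Derivation.add_apply,
        Derivation.smul_apply, ham_apply, smul_eq_mul]
      rw [hPleib g h (P k m), hPleib k f (P g m), hPjac g k m]
      ring

/-- The Jacobiator. -/
noncomputable def jac (α β γ : Ω) : Ω :=
  brk P hPskew hPleib α (brk P hPskew hPleib β γ)
    - brk P hPskew hPleib (brk P hPskew hPleib α β) γ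
    - brk P hPskew hPleib β (brk P hPskew hPleib α γ)

theorem jac_def (α β γ : Ω) : jac P hPskew hPleib α β γ =
  brk P hPskew hPleib α (brk P hPskew hPleib β γ)
    - brk P hPskew hPleib (brk P hPskew hPleib α β) γ
    - brk P hPskew hPleib β (brk P hPskew hPleib α γ) := rfl

theorem jac_zero1 (β γ : Ω) : jac P hPskew hPleib 0 β γ = 0 := by
  simp [jac, brk_zero_left, brk_zero_right]

theorem jac_zero2 (α γ : Ω) : jac P hPskew hPleib α 0 γ = 0 := by
  simp [jac, brk_zero_left, brk_zero_right]

theorem jac_zero3 (α β : Ω) : jac P hPskew hPleib α β 0 = 0 := by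
  simp [jac, brk_zero_left, brk_zero_right]

theorem jac_add1 (α α' β γ : Ω) :
    jac P hPskew hPleib (α + α') β γ
      = jac P hPskew hPleib α β γ + jac P hPskew hPleib α' β γ := by
  simp only [jac, brk_add_left, brk_add_right]
  abel

theorem jac_add2 (α β β' γ : Ω) :
    jac P hPskew hPleib α (β + β') γ
      = jac P hPskew hPleib α β γ + jac P hPskew hPleib α β' γ := by
  simp only [jac, brk_add_left, brk_add_right]
  abel

theorem jac_add3 (α β γ γ' : Ω) :
    jac P hPskew hPleib α β (γ + γ')
      = jac P hPskew hPleib α β γ + jac P hPskew hPleib α β γ' := by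
  simp only [jac, brk_add_left, brk_add_right]
  abel

theorem jac_swap12 (α β γ : Ω) :
    jac P hPskew hPleib α β γ = - jac P hPskew hPleib β α γ := by
  simp only [jac]
  rw [brk_antisym P hPskew hPleib β α, brk_neg_left]
  abel

theorem jac_swap23 (α β γ : Ω) :
    jac P hPskew hPleib α β γ = - jac P hPskew hPleib α γ β := by
  simp only [jac]
  rw [brk_antisym P hPskew hPleib γ β, brk_neg_right,
    brk_antisym P hPskew hPleib (brk P hPskew hPleib α γ) β,
    brk_antisym P hPskew hPleib γ (brk P hPskew hPleib α β)]
  abel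

theorem jac_smulS3 (hPjac : ∀ f g h, P f (P g h) = P (P f g) h + P g (P f h)) (α β γ : Ω) (s : S) :
    jac P hPskew hPleib α β (s • γ) = s • jac P hPskew hPleib α β γ := by
  simp only [jac]
  rw [brk_leibniz P hPskew hPleib β γ s, brk_add_right,
    brk_leibniz P hPskew hPleib α (brk P hPskew hPleib β γ) s,
    brk_leibniz P hPskew hPleib α γ (anchor P hPskew hPleib β s),
    brk_leibniz P hPskew hPleib (brk P hPskew hPleib α β) γ s,
    brk_leibniz P hPskew hPleib α γ s, brk_add_right,
    brk_leibniz P hPskew hPleib β (brk P hPskew hPleib α γ) s,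
    brk_leibniz P hPskew hPleib β γ (anchor P hPskew hPleib α s),
    anchor_brk P hPskew hPleib hPjac α β s, sub_smul, smul_sub, smul_sub]
  abel

theorem jac_D (hPjac : ∀ f g h, P f (P g h) = P (P f g) h + P g (P f h)) (f g k : S) :
    jac P hPskew hPleib (dd f) (dd g) (dd k) = 0 := by
  simp only [jac]
  rw [brk_D_D, brk_D_D, brk_D_D, brk_D_D, brk_D_D, brk_D_D, hPjac f g k, map_add]
  abel

theorem jacobi (hPjac : ∀ f g h, P f (P g h) = P (P f g) h + P g (P f h)) (α β γ : Ω) :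
    jac P hPskew hPleib α β γ = 0 := by
  have base3 : ∀ g k : S, ∀ γ : Ω, jac P hPskew hPleib (dd g) (dd k) γ = 0 := by
    intro g k γ
    induction γ using omega_induction with
    | h0 => exact jac_zero3 P hPskew hPleib _ _
    | hadd x y hx hy => rw [jac_add3, hx, hy, add_zero]
    | hgen l m => rw [jac_smulS3 P hPskew hPleib hPjac, jac_D P hPskew hPleib hPjac, smul_zero]
  have base2 : ∀ g : S, ∀ β γ : Ω, jac P hPskew hPleib (dd g) β γ = 0 := by
    intro g β γ
    induction β using omega_induction with
    | h0 => exact jac_zero2 P hPskew hPleib _ _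
    | hadd x y hx hy => rw [jac_add2, hx, hy, add_zero]
    | hgen h k =>
      rw [jac_swap23, jac_smulS3 P hPskew hPleib hPjac,
        jac_swap23, base3 g k γ, neg_zero, smul_zero, neg_zero]
  induction α using omega_induction with
  | h0 => exact jac_zero1 P hPskew hPleib _ _
  | hadd x y hx hy => rw [jac_add1, hx, hy, add_zero]
  | hgen f g =>
    have h2 : jac P hPskew hPleib β γ (dd g) = 0 := by
      rw [jac_swap23, jac_swap12, base2 g β γ]
      simp
    rw [jac_swap12, jac_swap23, jac_smulS3 P hPskew hPleib hPjac, h2, smul_zero]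
    simp

end Jac

theorem poisson_kaehler
    (hPskew : ∀ f g, P f g = - P g f)
    (hPjac : ∀ f g h, P f (P g h) = P (P f g) h + P g (P f h))
    (hPleib : ∀ f g h, P f (g * h) = P f g * h + g * P f h) :
    ∃! bρ : (KaehlerDifferential ℝ S → KaehlerDifferential ℝ S → KaehlerDifferential ℝ S) ×
            (KaehlerDifferential ℝ S →ₗ[S] Derivation ℝ S S),
      (∀ α β γ, bρ.1 (α + β) γ = bρ.1 α γ + bρ.1 β γ) ∧
      (∀ (c : ℝ) α β, bρ.1 (c • α) β = c • bρ.1 α β) ∧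
      (∀ α β, bρ.1 α β = - bρ.1 β α) ∧
      (∀ α β γ, bρ.1 α (bρ.1 β γ) = bρ.1 (bρ.1 α β) γ + bρ.1 β (bρ.1 α γ)) ∧
      (∀ α β (f : S), bρ.1 α (f • β) = f • bρ.1 α β + (bρ.2 α f) • β) ∧
      (∀ f g, bρ.2 (KaehlerDifferential.D ℝ S f) g = P f g) ∧
      (∀ f g, bρ.1 (KaehlerDifferential.D ℝ S f) (KaehlerDifferential.D ℝ S g)
          = KaehlerDifferential.D ℝ S (P f g)) ∧
      (∀ f g h k, bρ.1 (f • KaehlerDifferential.D ℝ S g)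
            (h • KaehlerDifferential.D ℝ S k)
          = (f * h) • KaehlerDifferential.D ℝ S (P g k)
            + (f * P g h) • KaehlerDifferential.D ℝ S k
            - (h * P k f) • KaehlerDifferential.D ℝ S g) := by
  refine ⟨(brk P hPskew hPleib, anchor P hPskew hPleib),
    ⟨fun α β γ => brk_add_left P hPskew hPleib α β γ,
     fun c α β => brk_smulR_left P hPskew hPleib c α β,
     fun α β => brk_antisym P hPskew hPleib α β,
     fun α β γ => ?_,
     fun α β f => brk_leibniz P hPskew hPleib α β f,
     fun f g => ?_,
     fun f g => brk_D_D P hPskew hPleib f g,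
     fun f g h k => brk_gen P hPskew hPleib f g h k⟩, ?_⟩
  · have h := jacobi P hPskew hPleib hPjac α β γ
    rw [jac_def, sub_sub, sub_eq_zero] at h
    exact h
  · rw [anchor_D]
    simp
  · intro y hy
    obtain ⟨h1, h2, h3, h4, h5, h6, h7, h8⟩ := hy
    have hzl : ∀ β, y.1 0 β = 0 := by
      intro β
      have h := h1 0 0 β
      rw [add_zero] at h
      exact right_eq_add.mp h
    have hzr : ∀ α, y.1 α 0 = 0 := by
      intro α
      rw [h3, hzl, neg_zero]
    have hρ : y.2 = anchor P hPskew hPleib := by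
      apply LinearMap.ext
      intro ω
      induction ω using omega_induction with
      | h0 => rw [map_zero, map_zero]
      | hadd x y hx hy => rw [map_add, map_add, hx, hy]
      | hgen f g =>
        rw [map_smul, map_smul, anchor_D]
        congr 1
        ext m
        rw [h6 g m, ham_apply]
    have hb : y.1 = brk P hPskew hPleib := by
      funext α β
      induction α using omega_induction with
      | h0 => rw [hzl, brk_zero_left]
      | hadd x y hx hy => rw [h1, brk_add_left, hx, hy]
      | hgen f g =>
        induction β using omega_induction with
        | h0 => rw [hzr, brk_zero_right]
        | hadd x y hx hy =>
          rw [h3, h1, h3 x, h3 y, hx, hy, brk_add_right]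
          abel
        | hgen h k => rw [h8, brk_gen]
    exact Prod.ext hb hρ

end PoissonKaehlerAux

/-- For a Poisson manifold `M` there is a unique Lie algebroid structure on the
module of 1-forms (Kähler differentials of `C^∞(M)`) with `[df, dg] = d{f,g}` and anchor
`df ↦ X_f = {f,·}`; it satisfies the Leibniz rule, the Jacobi identity, and on generators the
bracket is given by the formula `[f dg, h dk] = fh d{g,k} + f{g,h} dk − h{k,f} dg`
(the Lie-derivative formula `[α,β] = L_{π♯α}β − L_{π♯β}α − d(π(α,β))`). -/
theorem cotangent_lie_algebroid_of_poisson
    {E : Type*} [NormedAddCommGroup E] [NormedSpace ℝ E]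
    {H : Type*} [TopologicalSpace H] (I : ModelWithCorners ℝ E H)
    (M : Type*) [TopologicalSpace M] [ChartedSpace H M]
    -- a Poisson bracket on `C^∞(M)`:
    (P : Cinf I M →ₗ[ℝ] Cinf I M →ₗ[ℝ] Cinf I M)
    (hPskew : ∀ f g, P f g = - P g f)
    (hPjac : ∀ f g h, P f (P g h) = P (P f g) h + P g (P f h))
    (hPleib : ∀ f g h, P f (g * h) = P f g * h + g * P f h) :
    ∃! bρ : (KaehlerDifferential ℝ (Cinf I M) → KaehlerDifferential ℝ (Cinf I M) →
              KaehlerDifferential ℝ (Cinf I M)) ×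
            (KaehlerDifferential ℝ (Cinf I M) →ₗ[Cinf I M] Derivation ℝ (Cinf I M) (Cinf I M)),
      -- Lie bracket axioms:
      (∀ α β γ, bρ.1 (α + β) γ = bρ.1 α γ + bρ.1 β γ) ∧
      (∀ (c : ℝ) α β, bρ.1 (c • α) β = c • bρ.1 α β) ∧
      (∀ α β, bρ.1 α β = - bρ.1 β α) ∧
      (∀ α β γ, bρ.1 α (bρ.1 β γ) = bρ.1 (bρ.1 α β) γ + bρ.1 β (bρ.1 α γ)) ∧
      -- Leibniz rule with respect to the anchor:
      (∀ α β (f : Cinf I M), bρ.1 α (f • β) = f • bρ.1 α β + (bρ.2 α f) • β) ∧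
      -- the anchor sends `df` to the Hamiltonian vector field `X_f = {f,·}`:
      (∀ f g, bρ.2 (KaehlerDifferential.D ℝ (Cinf I M) f) g = P f g) ∧
      -- the bracket on exact forms is `[df, dg] = d{f,g}`:
      (∀ f g, bρ.1 (KaehlerDifferential.D ℝ (Cinf I M) f) (KaehlerDifferential.D ℝ (Cinf I M) g)
          = KaehlerDifferential.D ℝ (Cinf I M) (P f g)) ∧
      -- the resulting formula for the bracket on generators:
      (∀ f g h k, bρ.1 (f • KaehlerDifferential.D ℝ (Cinf I M) g)
            (h • KaehlerDifferential.D ℝ (Cinf I M) k)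
          = (f * h) • KaehlerDifferential.D ℝ (Cinf I M) (P g k)
            + (f * P g h) • KaehlerDifferential.D ℝ (Cinf I M) k
            - (h * P k f) • KaehlerDifferential.D ℝ (Cinf I M) g) :=
  PoissonKaehlerAux.poisson_kaehler P hPskew hPjac hPleib
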